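/- Let N ≥ 1, let k ≥ 2 and let F be a modular form of weight k and level Γ(N). For 0 ≤ j ≤ k−2 and τ ∈ ℍ define the Eichler integral W_j(F)(τ) := −i·∫₀^∞ (F(τ+iu) − a₀(F))·(τ+iu)^j du + a₀(F)·τ^{j+1}/(j+1). Then the integral converges absolutely for every τ ∈ ℍ, and W_j(F) is holomorphic on ℍ with complex derivative (d/dτ) W_j(F)(τ) = F(τ)·τ^j. -/

import Mathlib

noncomputable section

open scoped MatrixGroups UpperHalfPlane
open MeasureTheory Filter Complex
open scoped Topology

set_option maxHeartbeats 2000000 in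
/-- Let `N ≥ 1`, `k ≥ 2` and let `F` be a modular form of weight `k` and
level `Γ(N)`, with constant Fourier coefficient `a₀` at infinity.  For `0 ≤ j ≤ k - 2`,
the Eichler integral
`W_j(F)(τ) = -i·∫₀^∞ (F(τ+iu) - a₀)·(τ+iu)^j du + a₀·τ^{j+1}/(j+1)`
converges absolutely for every `τ ∈ ℍ`, and `W_j(F)` is holomorphic on `ℍ` with complex
derivative `(d/dτ) W_j(F)(τ) = F(τ)·τ^j`.  (Here `Fc` is any extension of `F` to `ℂ` and
`W` is the function defined by the above formula.) -/
theorem statement7 (N : ℕ) (hN : 1 ≤ N) (k : ℤ) (hk : 2 ≤ k)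
    (F : ModularForm (CongruenceSubgroup.Gamma N) k)
    (a0 : ℂ)
    (ha0 : Tendsto (fun τ : ℍ => F τ) UpperHalfPlane.atImInfty (nhds a0))
    (j : ℕ) (hj : (j : ℤ) ≤ k - 2)
    (Fc : ℂ → ℂ) (hFc : ∀ τ : ℍ, Fc (τ : ℂ) = F τ)
    (W : ℂ → ℂ)
    (hW : ∀ z : ℂ, W z =
      (-Complex.I) * (∫ u in Set.Ioi (0 : ℝ),
          (Fc (z + u * Complex.I) - a0) * (z + u * Complex.I) ^ j) +
        a0 * z ^ (j + 1) / (j + 1)) :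
    ∀ τ : ℍ,
      MeasureTheory.IntegrableOn
        (fun u : ℝ => (Fc ((τ : ℂ) + u * Complex.I) - a0) * ((τ : ℂ) + u * Complex.I) ^ j)
        (Set.Ioi 0) ∧
      HasDerivAt W (F τ * (τ : ℂ) ^ j) (τ : ℂ) := by
  haveI : NeZero N := ⟨by omega⟩
  have hNR : (0:ℝ) < N := by exact_mod_cast Nat.lt_of_lt_of_le Nat.zero_lt_one hN
  have hπ : 0 < Real.pi := Real.pi_pos
  -- the function `F - a0`, as a function on `ℂ`
  set f : ℂ → ℂ := fun w => F (UpperHalfPlane.ofComplex w) - a0 with hf_def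
  have hfd : ∀ ⦃z : ℂ⦄, 0 < z.im → DifferentiableAt ℂ f z := fun z hz =>
    (UpperHalfPlane.mdifferentiableAt_iff.mp (ModularFormClass.holo F ⟨z, hz⟩)).sub_const a0
  have hper : Function.Periodic f (N:ℝ) := fun w => by
    simp only [hf_def, sub_left_inj]
    exact SlashInvariantFormClass.periodic_comp_ofComplex (f := F) (h := (N:ℝ)) (by simp) w
  have hzer : Tendsto f (comap Complex.im atTop) (𝓝 0) := by
    have h1 : Tendsto (fun z : ℂ => F (UpperHalfPlane.ofComplex z)) (comap Complex.im atTop)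
        (𝓝 a0) := ha0.comp UpperHalfPlane.tendsto_comap_im_ofComplex
    simpa [hf_def, sub_self] using h1.sub_const a0
  have hhol : ∀ᶠ z : ℂ in comap Complex.im atTop, DifferentiableAt ℂ f z :=
    eventually_of_mem (Filter.preimage_mem_comap (Ioi_mem_atTop 0)) fun z hz => hfd hz
  have hdecay := hper.exp_decay_of_zero_at_inf hNR hhol hzer
  obtain ⟨C, hC0, hC⟩ := hdecay.exists_pos
  rw [Asymptotics.isBigOWith_iff, Filter.eventually_comap] at hC
  obtain ⟨A, hA'⟩ := Filter.eventually_atTop.mp hC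
  have hA : ∀ z : ℂ, A ≤ z.im → ‖f z‖ ≤ C * Real.exp (-2 * Real.pi * z.im / N) := by
    intro z hz
    simpa [Real.norm_eq_abs, Real.abs_exp] using hA' z.im hz z rfl
  intro τ
  have ht : 0 < (τ:ℂ).im := by simpa using τ.im_pos
  set t : ℝ := (τ:ℂ).im with ht_def
  set ε : ℝ := t/4 with hε_def
  set ρ : ℝ := t/8 with hρ_def
  have hε : 0 < ε := by positivity
  have hρ : 0 < ρ := by positivity
  set A₀ : ℝ := max A t with hA₀_def
  have hA₀A : A ≤ A₀ := le_max_left _ _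
  have hA₀t : 0 < A₀ := lt_of_lt_of_le ht (le_max_right _ _)
  -- bound of f on a compact rectangle
  set K : Set ℂ := Set.Icc ((τ:ℂ).re - t) ((τ:ℂ).re + t) ×ℂ Set.Icc (t/2) A₀ with hK_def
  have hK : IsCompact K :=
    Metric.isCompact_of_isClosed_isBounded (isClosed_Icc.reProdIm isClosed_Icc)
      ((Metric.isBounded_Icc _ _).reProdIm (Metric.isBounded_Icc _ _))
  obtain ⟨M0, hM0⟩ := hK.exists_bound_of_continuousOn (f := f) (fun z hz => by
    have : 0 < z.im := lt_of_lt_of_le (by positivity) (Complex.mem_reProdIm.mp hz).2.1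
    exact (hfd this).continuousAt.continuousWithinAt)
  set M : ℝ := max M0 0 with hM_def
  have hMnn : 0 ≤ M := le_max_right _ _
  have hM : ∀ z ∈ K, ‖f z‖ ≤ M := fun z hz => (hM0 z hz).trans (le_max_left _ _)
  -- estimate of f on the strip
  have hstrip : ∀ ζ : ℂ, t/2 ≤ ζ.im → |ζ.re - (τ:ℂ).re| ≤ t →
      ‖f ζ‖ ≤ (M+C) * Real.exp (2*Real.pi*(A₀ - ζ.im)/N) := by
    intro ζ h1 h2
    rcases le_or_gt ζ.im A₀ with h3 | h3
    · have hζK : ζ ∈ K := by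
        rw [hK_def, Complex.mem_reProdIm]
        have := abs_le.mp h2
        exact ⟨⟨by linarith [this.1], by linarith [this.2]⟩, ⟨h1, h3⟩⟩
      have he1 : (1:ℝ) ≤ Real.exp (2*Real.pi*(A₀ - ζ.im)/N) := by
        rw [Real.one_le_exp_iff]
        have : 0 ≤ A₀ - ζ.im := by linarith
        positivity
      nlinarith [hM ζ hζK, Real.exp_pos (2*Real.pi*(A₀ - ζ.im)/N)]
    · have hb := hA ζ (le_trans hA₀A h3.le)
      have he2 : Real.exp (-2 * Real.pi * ζ.im / N) ≤ Real.exp (2*Real.pi*(A₀ - ζ.im)/N) := by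
        rw [Real.exp_le_exp]
        rw [div_le_div_iff₀ hNR hNR]
        nlinarith [mul_pos (mul_pos hπ hA₀t) hNR]
      nlinarith [Real.exp_pos (-2 * Real.pi * ζ.im / N), Real.exp_pos (2*Real.pi*(A₀ - ζ.im)/N)]
  set R : ℝ := |(τ:ℂ).re| + t with hR_def
  have hR0 : 0 ≤ R := by positivity
  have habs : ∀ ζ : ℂ, 0 ≤ ζ.im → |ζ.re - (τ:ℂ).re| ≤ t → ‖ζ‖ ≤ R + ζ.im := by
    intro ζ h1 h2
    have h3 := Complex.norm_le_abs_re_add_abs_im ζ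
    have h4 : |ζ.re| ≤ |(τ:ℂ).re| + t := by
      have := abs_sub_abs_le_abs_sub ζ.re (τ:ℂ).re
      linarith
    rw [_root_.abs_of_nonneg h1] at h3
    linarith
  -- g = (F - a0) * z^j
  set g : ℂ → ℂ := fun w => f w * w ^ j with hg_def
  have hgdiff : ∀ ⦃z : ℂ⦄, 0 < z.im → DifferentiableAt ℂ g z := fun z hz =>
    (hfd hz).mul (differentiableAt_pow j)
  have hgcont : ∀ ⦃z : ℂ⦄, 0 < z.im → ContinuousAt g z := fun z hz => (hgdiff hz).continuousAt
  set c : ℝ := Real.pi / N with hc_def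
  have hc : 0 < c := div_pos hπ hNR
  -- master estimate for g on the strip
  have hmaster : ∀ (u : ℝ), 0 ≤ u → ∀ ζ : ℂ, t/2 ≤ ζ.im → |ζ.re - (τ:ℂ).re| ≤ t →
      u ≤ ζ.im + ρ → ζ.im ≤ 2*t + u →
      ‖g ζ‖ ≤ (M+C) * Real.exp (2*Real.pi*(A₀+ρ)/N) *
        ((R + 2*t + u)^j * Real.exp (-c*u) * Real.exp (-c*u)) := by
    intro u hu ζ h1 h2 h3 h4
    have hζ0 : 0 < ζ.im := by linarith
    have hMC : 0 ≤ M + C := by linarith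
    have hb1 : ‖g ζ‖ ≤ ((M+C) * Real.exp (2*Real.pi*(A₀ - ζ.im)/N)) * (R + ζ.im)^j := by
      rw [hg_def]
      simp only [norm_mul, norm_pow]
      exact mul_le_mul (hstrip ζ h1 h2)
        (pow_le_pow_left₀ (norm_nonneg ζ) (habs ζ hζ0.le h2) j)
        (by positivity) (mul_nonneg hMC (Real.exp_pos _).le)
    have hb2 : Real.exp (2*Real.pi*(A₀ - ζ.im)/N) ≤
        Real.exp (2*Real.pi*(A₀+ρ)/N) * (Real.exp (-c*u) * Real.exp (-c*u)) := by
      rw [← Real.exp_add, ← Real.exp_add, Real.exp_le_exp, hc_def]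
      have heq : 2*Real.pi*(A₀+ρ)/N + (-(Real.pi/N)*u + -(Real.pi/N)*u)
          = (2*Real.pi*(A₀+ρ) - 2*Real.pi*u)/N := by field_simp; ring
      rw [heq, div_le_div_iff₀ hNR hNR]
      nlinarith [mul_nonneg (mul_nonneg (by linarith : (0:ℝ) ≤ 2*Real.pi)
        (by linarith : (0:ℝ) ≤ ζ.im + ρ - u)) hNR.le]
    have hb3 : (R + ζ.im)^j ≤ (R + 2*t + u)^j :=
      pow_le_pow_left₀ (by linarith) (by linarith) j
    calc ‖g ζ‖ ≤ ((M+C) * Real.exp (2*Real.pi*(A₀ - ζ.im)/N)) * (R + ζ.im)^j := hb1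
      _ ≤ ((M+C) * (Real.exp (2*Real.pi*(A₀+ρ)/N) * (Real.exp (-c*u) * Real.exp (-c*u)))) *
          (R + 2*t + u)^j :=
        mul_le_mul (mul_le_mul_of_nonneg_left hb2 hMC) hb3 (pow_nonneg (by linarith) j)
          (mul_nonneg hMC (by positivity))
      _ = (M+C) * Real.exp (2*Real.pi*(A₀+ρ)/N) *
        ((R + 2*t + u)^j * Real.exp (-c*u) * Real.exp (-c*u)) := by ring
  set D : ℝ := (M+C) * Real.exp (2*Real.pi*(A₀+ρ)/N) * (1 + 1/ρ) with hD_def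
  have hD0 : 0 ≤ D := by
    have hMC : 0 ≤ M + C := by linarith
    positivity
  set P : ℝ → ℝ := fun u => (R + 2*t + u)^j * Real.exp (-c*u) with hP_def
  set bound : ℝ → ℝ := fun u => D * P u * Real.exp (-c*u) with hbound_def
  have hPnn : ∀ u : ℝ, 0 ≤ u → 0 ≤ P u := fun u hu => by
    rw [hP_def]; positivity
  have harith : ∀ E X e : ℝ, 0 < E → 0 ≤ X → 0 < e →
      (M+C) * E * (X*e*e) ≤ (M+C)*E*(1+1/ρ)*(X*e)*e ∧
      (M+C) * E * (X*e*e) / ρ ≤ (M+C)*E*(1+1/ρ)*(X*e)*e := by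
    intro E X e hE hX he
    have hMC : 0 ≤ M + C := by linarith
    have k1 : 0 ≤ (M+C)*E*(X*(e*e)) :=
      mul_nonneg (mul_nonneg hMC hE.le) (mul_nonneg hX (by positivity))
    have hρ' : ρ ≠ 0 := ne_of_gt hρ
    constructor
    · have hid : (M+C)*E*(1+1/ρ)*(X*e)*e
          = (M+C)*E*(X*e*e) + ((M+C)*E*(X*(e*e)))*(1/ρ) := by field_simp
      have k2 : 0 ≤ ((M+C)*E*(X*(e*e)))*(1/ρ) := mul_nonneg k1 (by positivity)
      linarith
    · rw [div_le_iff₀ hρ]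
      have hid : (M+C)*E*(1+1/ρ)*(X*e)*e*ρ
          = (M+C)*E*(X*(e*e)) + (M+C)*E*(X*(e*e))*ρ := by field_simp; ring
      have k3 : 0 ≤ (M+C)*E*(X*(e*e))*ρ := mul_nonneg k1 hρ.le
      have : (M+C)*E*(X*e*e) = (M+C)*E*(X*(e*e)) := by ring
      linarith
  -- key estimate: on the ball around τ
  have him : ∀ (x : ℂ) (u : ℝ), (x + u*Complex.I).im = x.im + u := fun x u => by simp
  have hre : ∀ (x : ℂ) (u : ℝ), (x + u*Complex.I).re = x.re := fun x u => by simp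
  have hkey : ∀ u : ℝ, 0 < u → ∀ x ∈ Metric.ball (τ:ℂ) ε,
      ‖g (x + u*Complex.I)‖ ≤ bound u ∧ ‖deriv g (x + u*Complex.I)‖ ≤ bound u := by
    intro u hu x hx
    rw [Metric.mem_ball, Complex.dist_eq] at hx
    have hxre : |x.re - (τ:ℂ).re| < ε := by
      have := Complex.abs_re_le_norm (x - (τ:ℂ))
      rw [Complex.sub_re] at this
      linarith
    have hxim : |x.im - t| < ε := by
      have := Complex.abs_im_le_norm (x - (τ:ℂ))
      rw [Complex.sub_im] at this
      linarith
    have hxim1 : t - ε < x.im := by have := abs_lt.mp hxim; linarith [this.1]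
    have hxim2 : x.im < t + ε := by have := abs_lt.mp hxim; linarith [(abs_lt.mp hxim).2]
    set w := x + u*Complex.I with hw_def
    have hwim : w.im = x.im + u := him x u
    have hwre : w.re = x.re := hre x u
    have hεt : ε = t/4 := hε_def
    have hρt : ρ = t/8 := hρ_def
    have hMC : 0 ≤ M + C := by linarith
    have hE1 : (0:ℝ) < Real.exp (2*Real.pi*(A₀+ρ)/N) := Real.exp_pos _
    constructor
    · have := hmaster u hu.le w (by rw [hwim]; linarith) (by rw [hwre]; linarith [abs_lt.mp hxre])
        (by rw [hwim]; linarith) (by rw [hwim]; linarith)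
      refine this.trans ?_
      have hbeq : bound u = (M+C)*Real.exp (2*Real.pi*(A₀+ρ)/N)*(1+1/ρ)*
          (((R+2*t+u)^j)*Real.exp (-c*u))*Real.exp (-c*u) := by
        simp only [hbound_def, hD_def, hP_def]
      rw [hbeq]
      exact (harith _ _ _ (Real.exp_pos _) (pow_nonneg (by linarith) j) (Real.exp_pos _)).1
    · -- Cauchy estimate
      have hsub : ∀ ζ ∈ Metric.closedBall w ρ, 0 < ζ.im := by
        intro ζ hζ
        rw [Metric.mem_closedBall, Complex.dist_eq] at hζ
        have := Complex.abs_im_le_norm (ζ - w)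
        rw [Complex.sub_im] at this
        have := abs_le.mp (this.trans hζ)
        have : w.im - ρ ≤ ζ.im := by linarith [this.1]
        rw [hwim] at this; linarith
      have hdc : DiffContOnCl ℂ g (Metric.ball w ρ) := by
        apply DifferentiableOn.diffContOnCl
        rw [closure_ball w hρ.ne']
        exact fun ζ hζ => (hgdiff (hsub ζ hζ)).differentiableWithinAt
      have hCs : ∀ ζ ∈ Metric.sphere w ρ, ‖g ζ‖ ≤ (M+C) * Real.exp (2*Real.pi*(A₀+ρ)/N) *
          ((R + 2*t + u)^j * Real.exp (-c*u) * Real.exp (-c*u)) := by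
        intro ζ hζ
        rw [Metric.mem_sphere, Complex.dist_eq] at hζ
        have h5 := Complex.abs_im_le_norm (ζ - w)
        have h6 := Complex.abs_re_le_norm (ζ - w)
        rw [Complex.sub_im] at h5
        rw [Complex.sub_re] at h6
        rw [hζ] at h5 h6
        have h5' := abs_le.mp h5
        have h6' := abs_le.mp h6
        refine hmaster u hu.le ζ ?_ ?_ ?_ ?_
        · rw [hwim] at h5'; linarith [h5'.1]
        · rw [hwre] at h6'
          have := abs_lt.mp hxre
          rw [abs_le]
          constructor <;> linarith [h6'.1, h6'.2, this.1, this.2]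
        · rw [hwim] at h5'; linarith [h5'.1]
        · rw [hwim] at h5'; linarith [h5'.2]
      have hcauchy := Complex.norm_deriv_le_of_forall_mem_sphere_norm_le hρ hdc hCs
      refine hcauchy.trans ?_
      have hbeq : bound u = (M+C)*Real.exp (2*Real.pi*(A₀+ρ)/N)*(1+1/ρ)*
          (((R+2*t+u)^j)*Real.exp (-c*u))*Real.exp (-c*u) := by
        simp only [hbound_def, hD_def, hP_def]
      rw [hbeq]
      exact (harith _ _ _ (Real.exp_pos _) (pow_nonneg (by linarith) j) (Real.exp_pos _)).2
  -- integrability and decay of the bound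
  have hφ : Tendsto (fun u : ℝ => c*(R + 2*t + u)) atTop atTop := by
    apply Filter.Tendsto.const_mul_atTop hc
    exact tendsto_atTop_add_const_left atTop (R + 2*t) tendsto_id
  have hP0 : Tendsto P atTop (𝓝 0) := by
    have h1 := (Real.tendsto_pow_mul_exp_neg_atTop_nhds_zero j).comp hφ
    have h2 := h1.const_mul ((c^j)⁻¹ * Real.exp (c*(R + 2*t)))
    rw [mul_zero] at h2
    refine h2.congr fun u => ?_
    simp only [Function.comp_apply, mul_pow, hP_def]
    rw [show -(c*(R + 2*t + u)) = -(c*(R+2*t)) + -c*u by ring, Real.exp_add,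
      Real.exp_neg (c*(R+2*t))]
    have hcne : (c:ℝ) ≠ 0 := ne_of_gt hc
    field_simp
  have hPev : ∀ᶠ u in atTop, P u ≤ 1 := by
    filter_upwards [hP0.eventually_lt_const one_pos] with u hu using hu.le
  have hbound_cont : Continuous bound := by
    rw [hbound_def, hP_def]; fun_prop
  have hbound_int : IntegrableOn bound (Set.Ioi 0) := by
    refine integrable_of_isBigO_exp_neg hc hbound_cont.continuousOn ?_
    refine Asymptotics.IsBigO.of_bound D ?_
    filter_upwards [hPev, eventually_ge_atTop (0:ℝ)] with u h1 h2
    have hbu : bound u = D * P u * Real.exp (-c*u) := by simp only [hbound_def]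
    have hnn : (0:ℝ) ≤ D * P u * Real.exp (-c*u) :=
      mul_nonneg (mul_nonneg hD0 (hPnn u h2)) (Real.exp_pos _).le
    rw [hbu, Real.norm_eq_abs, Real.norm_eq_abs, Real.abs_exp, _root_.abs_of_nonneg hnn]
    nlinarith [mul_nonneg (mul_nonneg hD0 (by linarith : (0:ℝ) ≤ 1 - P u))
      (Real.exp_pos (-c*u)).le]
  have hbound_tend : Tendsto bound atTop (𝓝 0) := by
    have hexp0 : Tendsto (fun u : ℝ => Real.exp (-c*u)) atTop (𝓝 0) :=
      Real.tendsto_exp_atBot.comp (tendsto_id.const_mul_atTop_of_neg (by linarith))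
    have := (hP0.const_mul D).mul hexp0
    simp only [mul_zero] at this
    exact this
  -- measurability
  have hmap : ∀ x : ℂ, Continuous fun u : ℝ => x + (u:ℂ)*Complex.I := fun x => by fun_prop
  have hmeas : ∀ x : ℂ, 0 < x.im →
      AEStronglyMeasurable (fun u : ℝ => g (x + u*Complex.I)) (volume.restrict (Set.Ioi 0)) := by
    intro x hx
    have hgco : ContinuousOn g {z : ℂ | 0 < z.im} :=
      fun z hz => (hgcont hz).continuousWithinAt
    refine (ContinuousOn.aestronglyMeasurable ?_ measurableSet_Ioi)
    refine hgco.comp (hmap x).continuousOn ?_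
    intro u hu
    simp only [Set.mem_setOf_eq, him]
    have := Set.mem_Ioi.mp hu; linarith
  have hopen : IsOpen {z : ℂ | 0 < z.im} := isOpen_lt continuous_const Complex.continuous_im
  have hAnal : AnalyticOnNhd ℂ g {z : ℂ | 0 < z.im} :=
    DifferentiableOn.analyticOnNhd (fun z hz => (hgdiff hz).differentiableWithinAt) hopen
  have hF'_meas : AEStronglyMeasurable (fun u : ℝ => deriv g ((τ:ℂ) + u*Complex.I))
      (volume.restrict (Set.Ioi 0)) := by
    have hdco : ContinuousOn (deriv g) {z : ℂ | 0 < z.im} :=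
      fun z hz => ((hAnal.deriv z hz).continuousAt).continuousWithinAt
    refine (ContinuousOn.aestronglyMeasurable ?_ measurableSet_Ioi)
    refine hdco.comp (hmap (τ:ℂ)).continuousOn ?_
    intro u hu
    simp only [Set.mem_setOf_eq, him]
    have := Set.mem_Ioi.mp hu; linarith
  have hF_meas : ∀ᶠ x in 𝓝 (τ:ℂ),
      AEStronglyMeasurable (fun u : ℝ => g (x + u*Complex.I)) (volume.restrict (Set.Ioi 0)) := by
    filter_upwards [hopen.mem_nhds (Set.mem_setOf.mpr ht)] with x hx using hmeas x hx
  have hτball : (τ:ℂ) ∈ Metric.ball (τ:ℂ) ε := Metric.mem_ball_self hε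
  have hF_int : Integrable (fun u : ℝ => g ((τ:ℂ) + u*Complex.I)) (volume.restrict (Set.Ioi 0)) := by
    refine Integrable.mono' hbound_int (hmeas _ ht) ?_
    filter_upwards [ae_restrict_mem measurableSet_Ioi] with u hu
    exact (hkey u hu (τ:ℂ) hτball).1
  have h_bound : ∀ᵐ (u : ℝ) ∂(volume.restrict (Set.Ioi (0:ℝ))), ∀ x ∈ Metric.ball (τ:ℂ) ε,
      ‖deriv g (x + u*Complex.I)‖ ≤ bound u := by
    filter_upwards [ae_restrict_mem measurableSet_Ioi] with u hu x hx
    exact (hkey u hu x hx).2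
  have h_diff : ∀ᵐ (u : ℝ) ∂(volume.restrict (Set.Ioi (0:ℝ))), ∀ x ∈ Metric.ball (τ:ℂ) ε,
      HasDerivAt (fun x : ℂ => g (x + u*Complex.I)) (deriv g (x + u*Complex.I)) x := by
    filter_upwards [ae_restrict_mem measurableSet_Ioi] with u hu x hx
    have h2 : 0 < (x + u*Complex.I).im := by
      rw [him]
      rw [Metric.mem_ball, Complex.dist_eq] at hx
      have h3 := Complex.abs_im_le_norm (x - (τ:ℂ))
      rw [Complex.sub_im] at h3
      have := abs_le.mp (h3.trans hx.le)
      have := Set.mem_Ioi.mp hu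
      have hεt : ε = t/4 := hε_def
      linarith [(abs_le.mp (h3.trans hx.le)).1]
    have := ((hgdiff h2).hasDerivAt).comp x ((hasDerivAt_id x).add_const ((u:ℂ)*Complex.I))
    simpa [Function.comp_def] using this
  obtain ⟨hint', hderivV⟩ :=
    hasDerivAt_integral_of_dominated_loc_of_deriv_le (𝕜 := ℂ) (α := ℝ) (E := ℂ) (μ := volume.restrict (Set.Ioi (0:ℝ)))
      (F := fun (x : ℂ) (u : ℝ) => g (x + u*Complex.I)) (x₀ := (τ:ℂ))
      (F' := fun (x : ℂ) (u : ℝ) => deriv g (x + u*Complex.I)) (bound := bound)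
      (Metric.ball_mem_nhds _ hε) hF_meas hF_int hF'_meas h_bound hbound_int h_diff
  -- the FTC computation
  have hmapd : ∀ u : ℝ, HasDerivAt (fun v : ℝ => (τ:ℂ) + (v:ℂ)*Complex.I) Complex.I u := by
    intro u
    have h1 : HasDerivAt (fun v : ℝ => (v:ℂ)) 1 u := Complex.ofRealCLM.hasDerivAt
    simpa using (h1.mul_const Complex.I).const_add (τ:ℂ)
  have hftc : (∫ u in Set.Ioi (0:ℝ), Complex.I * deriv g ((τ:ℂ) + u*Complex.I)) =
      0 - g ((τ:ℂ) + ((0:ℝ):ℂ)*Complex.I) := by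
    refine integral_Ioi_of_hasDerivAt_of_tendsto
      (f := fun u : ℝ => g ((τ:ℂ) + u*Complex.I))
      (f' := fun u : ℝ => Complex.I * deriv g ((τ:ℂ) + u*Complex.I)) (m := 0) ?_ ?_ ?_ ?_
    · have h0 : 0 < ((τ:ℂ) + (0:ℝ)*Complex.I).im := by rw [him]; linarith
      exact (ContinuousAt.comp (x := (0:ℝ)) (f := fun u : ℝ => (τ:ℂ) + u*Complex.I)
        (hgcont h0) ((hmap (τ:ℂ)).continuousAt)).continuousWithinAt
    · intro u hu
      have h2 : 0 < ((τ:ℂ) + u*Complex.I).im := by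
        rw [him]; have := Set.mem_Ioi.mp hu; linarith
      have := ((hgdiff h2).hasDerivAt).scomp u (hmapd u)
      simpa [smul_eq_mul, Function.comp_def] using this
    · exact hint'.const_mul Complex.I
    · refine squeeze_zero_norm' ?_ hbound_tend
      filter_upwards [eventually_gt_atTop (0:ℝ)] with u hu
      exact (hkey u hu (τ:ℂ) hτball).1
  have hIval : (∫ u in Set.Ioi (0:ℝ), deriv g ((τ:ℂ) + u*Complex.I)) = Complex.I * g (τ:ℂ) := by
    simp only [Complex.ofReal_zero, zero_mul, add_zero] at hftc
    have h3 : Complex.I * ∫ u in Set.Ioi (0:ℝ), deriv g ((τ:ℂ) + u*Complex.I) = 0 - g (τ:ℂ) := by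
      rw [← MeasureTheory.integral_const_mul]; exact hftc
    have h4 : Complex.I * (Complex.I * g (τ:ℂ)) = 0 - g (τ:ℂ) := by
      rw [← mul_assoc, Complex.I_mul_I]; ring
    exact mul_left_cancel₀ Complex.I_ne_zero (h3.trans h4.symm)
  -- relation between Fc and f
  have hFcf : ∀ z : ℂ, 0 < z.im → Fc z - a0 = f z := by
    intro z hz
    have h1 : Fc z = F ⟨z, hz⟩ := hFc ⟨z, hz⟩
    rw [h1, hf_def]
    simp only [UpperHalfPlane.ofComplex_apply_of_im_pos hz]
  constructor
  · refine MeasureTheory.IntegrableOn.congr_fun hF_int ?_ measurableSet_Ioi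
    intro u hu
    have h2 : 0 < ((τ:ℂ) + u*Complex.I).im := by
      rw [him]; have := Set.mem_Ioi.mp hu; linarith
    rw [hg_def]
    simp only
    rw [hFcf _ h2]
  · rw [hIval] at hderivV
    have hjne : ((j:ℂ) + 1) ≠ 0 := Nat.cast_add_one_ne_zero j
    have hpow := ((hasDerivAt_pow (j+1) (τ:ℂ)).const_mul a0).div_const ((j:ℂ) + 1)
    have h5 := (hderivV.const_mul (-Complex.I)).add hpow
    have hgτ : g (τ:ℂ) = (F τ - a0) * (τ:ℂ)^j := by
      rw [hg_def, hf_def]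
      simp only [UpperHalfPlane.ofComplex_apply]
    have hval : -Complex.I * (Complex.I * g (τ:ℂ)) +
        a0 * (↑(j+1) * (τ:ℂ)^(j+1-1)) / ((j:ℂ) + 1) = F τ * (τ:ℂ)^j := by
      rw [hgτ]
      have hII : -Complex.I * (Complex.I * ((F τ - a0) * (τ:ℂ)^j)) = (F τ - a0) * (τ:ℂ)^j := by
        rw [← mul_assoc, neg_mul, Complex.I_mul_I, neg_neg, one_mul]
      rw [hII]
      push_cast
      field_simp
      ring
    rw [hval] at h5
    refine h5.congr_of_eventuallyEq ?_
    filter_upwards [hopen.mem_nhds (Set.mem_setOf.mpr ht)] with z hz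
    rw [hW z]
    congr 1
    congr 1
    refine setIntegral_congr_fun measurableSet_Ioi ?_
    intro u hu
    have h2 : 0 < (z + u*Complex.I).im := by
      rw [him]; have := Set.mem_Ioi.mp hu; exact add_pos hz this
    simp only [hg_def]
    rw [hFcf _ h2]
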